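/- Let k be a field, let B and C be Hopf algebras over k with bijective antipodes (both denoted S), let ρ : B → C be a Hopf algebra homomorphism, and let l be an odd integer. Let M be a k-vector space with a right B-module structure (m,b) ↦ m·b and a coassociative counital right C-comodule structure δ(m) = m_0 ⊗ m_1 satisfying δ(m·b) = m_0·b_(2) ⊗ S(ρ(b_(1))) m_1 ρ(b_(3)) for all m ∈ M, b ∈ B. Define b·m := m·S^{-l}(b) and δ'(m) := S^l(m_1) ⊗ m_0. Then these formulas make M a left B-module and a coassociative counital left C-comodule, and they satisfy the left relative Yetter-Drinfeld condition: δ'(b·m) = ρ(b_(1)) m'_{-1} ρ(S(b_(3))) ⊗ b_(2)·m'_0 for all b ∈ B and m ∈ M, where δ'(m) = m'_{-1} ⊗ m'_0. -/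

import Mathlib

open TensorProduct

set_option maxHeartbeats 1000000
set_option synthInstance.maxHeartbeats 100000

section Machinery

open TensorProduct LinearMap Coalgebra

namespace YD

/-- Fin-indexed decomposition of a tensor. -/
theorem exists_fin {R M N : Type*} [CommSemiring R] [AddCommMonoid M] [AddCommMonoid N]
    [Module R M] [Module R N] (t : M ⊗[R] N) :
    ∃ (n : ℕ) (x : Fin n → M) (y : Fin n → N), t = ∑ i, x i ⊗ₜ[R] y i := by
  induction t with
  | zero => exact ⟨0, Fin.elim0, Fin.elim0, by simp⟩
  | tmul a b => exact ⟨1, fun _ => a, fun _ => b, by simp⟩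
  | add t₁ t₂ h₁ h₂ =>
    obtain ⟨n₁, x₁, y₁, rfl⟩ := h₁
    obtain ⟨n₂, x₂, y₂, rfl⟩ := h₂
    refine ⟨n₁ + n₂, Fin.append x₁ x₂, Fin.append y₁ y₂, ?_⟩
    rw [Fin.sum_univ_add]
    simp [Fin.append]


theorem map_map {k M N P Q M' N' : Type*} [CommSemiring k]
    [AddCommMonoid M] [AddCommMonoid N] [AddCommMonoid P] [AddCommMonoid Q]
    [AddCommMonoid M'] [AddCommMonoid N']
    [Module k M] [Module k N] [Module k P] [Module k Q] [Module k M'] [Module k N']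
    (a : P →ₗ[k] M') (b : Q →ₗ[k] N') (c : M →ₗ[k] P) (d : N →ₗ[k] Q) (t : M ⊗[k] N) :
    TensorProduct.map a b (TensorProduct.map c d t) = TensorProduct.map (a ∘ₗ c) (b ∘ₗ d) t :=
  (LinearMap.congr_fun (TensorProduct.map_comp a b c d) t).symm

section Conv

variable {k : Type*} [CommRing k] {D A : Type*}
  [AddCommGroup D] [Module k D] [Ring A] [Algebra k A]

/-- Convolution product on `Hom(D, A)` w.r.t. a comultiplication `dD`. -/
noncomputable def conv (dD : D →ₗ[k] D ⊗[k] D) (f g : D →ₗ[k] A) : D →ₗ[k] A :=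
  LinearMap.mul' k A ∘ₗ TensorProduct.map f g ∘ₗ dD

/-- Convolution unit. -/
noncomputable def cunit (eD : D →ₗ[k] k) : D →ₗ[k] A := Algebra.linearMap k A ∘ₗ eD

theorem conv_assoc (dD : D →ₗ[k] D ⊗[k] D)
    (hco : (TensorProduct.assoc k D D D).toLinearMap ∘ₗ TensorProduct.map dD LinearMap.id ∘ₗ dD
      = TensorProduct.map LinearMap.id dD ∘ₗ dD)
    (f g h : D →ₗ[k] A) : conv dD (conv dD f g) h = conv dD f (conv dD g h) := by
  have e1 : conv dD (conv dD f g) h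
      = (mul' k A ∘ₗ TensorProduct.map (mul' k A ∘ₗ TensorProduct.map f g) h)
        ∘ₗ (TensorProduct.map dD LinearMap.id ∘ₗ dD) := by
    unfold conv
    ext d
    simp only [LinearMap.comp_apply, map_map, LinearMap.comp_id, LinearMap.id_comp,
      LinearMap.comp_assoc]
  have e2 : conv dD f (conv dD g h)
      = (mul' k A ∘ₗ TensorProduct.map f (mul' k A ∘ₗ TensorProduct.map g h))
        ∘ₗ (TensorProduct.map LinearMap.id dD ∘ₗ dD) := by
    unfold conv
    ext d
    simp only [LinearMap.comp_apply, map_map, LinearMap.comp_id, LinearMap.id_comp,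
      LinearMap.comp_assoc]
  have e3 : (mul' k A ∘ₗ TensorProduct.map (mul' k A ∘ₗ TensorProduct.map f g) h)
      = (mul' k A ∘ₗ TensorProduct.map f (mul' k A ∘ₗ TensorProduct.map g h))
        ∘ₗ (TensorProduct.assoc k D D D).toLinearMap := by
    apply TensorProduct.ext_threefold
    intro x y z
    simp [mul_assoc]
  rw [e1, e2, e3]
  ext d
  have := congr($(hco) d)
  simp only [LinearMap.comp_apply] at this ⊢
  rw [this]

theorem conv_cunit_left (dD : D →ₗ[k] D ⊗[k] D) (eD : D →ₗ[k] k)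
    (hre : TensorProduct.map eD LinearMap.id ∘ₗ dD = TensorProduct.mk k k D 1)
    (f : D →ₗ[k] A) : conv dD (cunit eD) f = f := by
  have e1 : conv dD (cunit eD) f
      = (mul' k A ∘ₗ TensorProduct.map (Algebra.linearMap k A) f)
        ∘ₗ (TensorProduct.map eD LinearMap.id ∘ₗ dD) := by
    unfold conv cunit
    ext d
    simp only [LinearMap.comp_apply, map_map, LinearMap.comp_id, LinearMap.id_comp,
      LinearMap.comp_assoc]
  rw [e1, hre]
  ext d; simp [Algebra.TensorProduct.one_def]

theorem conv_cunit_right (dD : D →ₗ[k] D ⊗[k] D) (eD : D →ₗ[k] k)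
    (hle : TensorProduct.map LinearMap.id eD ∘ₗ dD = (TensorProduct.mk k D k).flip 1)
    (f : D →ₗ[k] A) : conv dD f (cunit eD) = f := by
  have e1 : conv dD f (cunit eD)
      = (mul' k A ∘ₗ TensorProduct.map f (Algebra.linearMap k A))
        ∘ₗ (TensorProduct.map LinearMap.id eD ∘ₗ dD) := by
    unfold conv cunit
    ext d
    simp only [LinearMap.comp_apply, map_map, LinearMap.comp_id, LinearMap.id_comp,
      LinearMap.comp_assoc]
  rw [e1, hle]
  ext d; simp [Algebra.commutes']

theorem conv_inv_unique (dD : D →ₗ[k] D ⊗[k] D) (eD : D →ₗ[k] k)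
    (hco : (TensorProduct.assoc k D D D).toLinearMap ∘ₗ TensorProduct.map dD LinearMap.id ∘ₗ dD
      = TensorProduct.map LinearMap.id dD ∘ₗ dD)
    (hre : TensorProduct.map eD LinearMap.id ∘ₗ dD = TensorProduct.mk k k D 1)
    (hle : TensorProduct.map LinearMap.id eD ∘ₗ dD = (TensorProduct.mk k D k).flip 1)
    {f g g' : D →ₗ[k] A}
    (h1 : conv dD f g = cunit eD) (h2 : conv dD g' f = cunit eD) : g = g' := by
  calc g = conv dD (cunit eD) g := (conv_cunit_left dD eD hre g).symm
    _ = conv dD (conv dD g' f) g := by rw [h2]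
    _ = conv dD g' (conv dD f g) := conv_assoc dD hco g' f g
    _ = conv dD g' (cunit eD) := by rw [h1]
    _ = g' := conv_cunit_right dD eD hle g'

end Conv


variable {k : Type*} [CommRing k]

section Ext
variable {M₁ M₂ M₃ M₄ M₅ M₆ W : Type*}
  [AddCommMonoid M₁] [AddCommMonoid M₂] [AddCommMonoid M₃] [AddCommMonoid M₄]
  [AddCommMonoid M₅] [AddCommMonoid M₆] [AddCommMonoid W]
  [Module k M₁] [Module k M₂] [Module k M₃] [Module k M₄] [Module k M₅] [Module k M₆]
  [Module k W]

theorem ext4 {f g : (M₁ ⊗[k] M₂) ⊗[k] (M₃ ⊗[k] M₄) →ₗ[k] W}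
    (h : ∀ a b c d, f ((a ⊗ₜ b) ⊗ₜ (c ⊗ₜ d)) = g ((a ⊗ₜ b) ⊗ₜ (c ⊗ₜ d))) : f = g := by
  apply TensorProduct.ext'
  intro X Y
  induction X using TensorProduct.induction_on with
  | zero => simp
  | tmul a b =>
    induction Y using TensorProduct.induction_on with
    | zero => simp
    | tmul c d => exact h a b c d
    | add Y₁ Y₂ h₁ h₂ => simp only [tmul_add, map_add, h₁, h₂]
  | add X₁ X₂ h₁ h₂ => simp only [add_tmul, map_add, h₁, h₂]

theorem ext6 {f g : ((M₁ ⊗[k] M₂) ⊗[k] M₃) ⊗[k] ((M₄ ⊗[k] M₅) ⊗[k] M₆) →ₗ[k] W}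
    (h : ∀ a b c d e e', f (((a ⊗ₜ b) ⊗ₜ c) ⊗ₜ ((d ⊗ₜ e) ⊗ₜ e')) =
      g (((a ⊗ₜ b) ⊗ₜ c) ⊗ₜ ((d ⊗ₜ e) ⊗ₜ e'))) : f = g := by
  apply TensorProduct.ext'
  intro X Y
  induction X using TensorProduct.induction_on with
  | zero => simp
  | tmul P c =>
    induction P using TensorProduct.induction_on with
    | zero => simp [zero_tmul]
    | tmul a b =>
      induction Y using TensorProduct.induction_on with
      | zero => simp
      | tmul Q e' =>
        induction Q using TensorProduct.induction_on with
        | zero => simp [zero_tmul]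
        | tmul d e => exact h a b c d e e'
        | add Q₁ Q₂ h₁ h₂ => simp only [add_tmul, tmul_add, map_add, h₁, h₂]
      | add Y₁ Y₂ h₁ h₂ => simp only [tmul_add, map_add, h₁, h₂]
    | add P₁ P₂ h₁ h₂ => simp only [add_tmul, map_add, h₁, h₂]
  | add X₁ X₂ h₁ h₂ => simp only [add_tmul, map_add, h₁, h₂]

end Ext

section TensorSquare
variable (k) (A : Type*) [Ring A] [Bialgebra k A]

/-- Comultiplication on `A ⊗ A`. -/
noncomputable def dD2 : A ⊗[k] A →ₗ[k] (A ⊗[k] A) ⊗[k] (A ⊗[k] A) :=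
  (tensorTensorTensorComm k A A A A).toLinearMap ∘ₗ
    TensorProduct.map Coalgebra.comul Coalgebra.comul

/-- Counit on `A ⊗ A`. -/
noncomputable def eD2 : A ⊗[k] A →ₗ[k] k :=
  LinearMap.mul' k k ∘ₗ TensorProduct.map Coalgebra.counit Coalgebra.counit

variable {k A}

lemma dD2_tmul (a b : A) :
    dD2 k A (a ⊗ₜ b) = (tensorTensorTensorComm k A A A A)
      ((Coalgebra.comul a) ⊗ₜ (Coalgebra.comul b)) := rfl

lemma eD2_tmul (a b : A) :
    eD2 k A (a ⊗ₜ b) = Coalgebra.counit (R := k) a * Coalgebra.counit (R := k) b := by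
  simp [eD2]

lemma hre2 : TensorProduct.map (eD2 k A) LinearMap.id ∘ₗ dD2 k A
    = TensorProduct.mk k k (A ⊗[k] A) 1 := by
  have key : TensorProduct.map (eD2 k A) LinearMap.id ∘ₗ
        (tensorTensorTensorComm k A A A A).toLinearMap
      = (TensorProduct.map (LinearMap.mul' k k) LinearMap.id ∘ₗ
          (tensorTensorTensorComm k k A k A).toLinearMap) ∘ₗ
        TensorProduct.map (TensorProduct.map Coalgebra.counit LinearMap.id)
          (TensorProduct.map Coalgebra.counit LinearMap.id) := by
    apply ext4
    intro a b c d
    simp [eD2]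
  apply TensorProduct.ext'
  intro a b
  have h1 := congr($(key) ((Coalgebra.comul (R := k) a) ⊗ₜ (Coalgebra.comul (R := k) b)))
  simp only [LinearMap.comp_apply, LinearEquiv.coe_toLinearMap, TensorProduct.map_tmul] at h1
  have h0 : (TensorProduct.map (eD2 k A) LinearMap.id ∘ₗ dD2 k A) (a ⊗ₜ b)
      = TensorProduct.map (eD2 k A) LinearMap.id
          ((tensorTensorTensorComm k A A A A) ((Coalgebra.comul a) ⊗ₜ (Coalgebra.comul b))) := by
    rw [LinearMap.comp_apply, dD2_tmul]
  rw [h0, h1]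
  have ha : TensorProduct.map (Coalgebra.counit (R := k)) LinearMap.id (Coalgebra.comul a)
      = (1 : k) ⊗ₜ a := Coalgebra.rTensor_counit_comul (R := k) a
  have hb : TensorProduct.map (Coalgebra.counit (R := k)) LinearMap.id (Coalgebra.comul b)
      = (1 : k) ⊗ₜ b := Coalgebra.rTensor_counit_comul (R := k) b
  rw [ha, hb]
  simp

lemma hle2 : TensorProduct.map LinearMap.id (eD2 k A) ∘ₗ dD2 k A
    = (TensorProduct.mk k (A ⊗[k] A) k).flip 1 := by
  have key : TensorProduct.map LinearMap.id (eD2 k A) ∘ₗ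
        (tensorTensorTensorComm k A A A A).toLinearMap
      = (TensorProduct.map LinearMap.id (LinearMap.mul' k k) ∘ₗ
          (tensorTensorTensorComm k A k A k).toLinearMap) ∘ₗ
        TensorProduct.map (TensorProduct.map LinearMap.id Coalgebra.counit)
          (TensorProduct.map LinearMap.id Coalgebra.counit) := by
    apply ext4
    intro a b c d
    simp [eD2]
  apply TensorProduct.ext'
  intro a b
  have h1 := congr($(key) ((Coalgebra.comul (R := k) a) ⊗ₜ (Coalgebra.comul (R := k) b)))
  simp only [LinearMap.comp_apply, LinearEquiv.coe_toLinearMap, TensorProduct.map_tmul] at h1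
  have h0 : (TensorProduct.map LinearMap.id (eD2 k A) ∘ₗ dD2 k A) (a ⊗ₜ b)
      = TensorProduct.map LinearMap.id (eD2 k A)
          ((tensorTensorTensorComm k A A A A) ((Coalgebra.comul a) ⊗ₜ (Coalgebra.comul b))) := by
    rw [LinearMap.comp_apply, dD2_tmul]
  rw [h0, h1]
  have ha : TensorProduct.map LinearMap.id (Coalgebra.counit (R := k)) (Coalgebra.comul a)
      = a ⊗ₜ (1 : k) := Coalgebra.lTensor_counit_comul (R := k) a
  have hb : TensorProduct.map LinearMap.id (Coalgebra.counit (R := k)) (Coalgebra.comul b)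
      = b ⊗ₜ (1 : k) := Coalgebra.lTensor_counit_comul (R := k) b
  rw [ha, hb]
  simp

lemma hco2 : (TensorProduct.assoc k (A ⊗[k] A) (A ⊗[k] A) (A ⊗[k] A)).toLinearMap ∘ₗ
      TensorProduct.map (dD2 k A) LinearMap.id ∘ₗ dD2 k A
    = TensorProduct.map LinearMap.id (dD2 k A) ∘ₗ dD2 k A := by
  have L1 : (TensorProduct.assoc k (A ⊗[k] A) (A ⊗[k] A) (A ⊗[k] A)).toLinearMap ∘ₗ
        TensorProduct.map (dD2 k A) LinearMap.id ∘ₗ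
          (tensorTensorTensorComm k A A A A).toLinearMap
      = ((TensorProduct.assoc k (A ⊗[k] A) (A ⊗[k] A) (A ⊗[k] A)).toLinearMap ∘ₗ
          TensorProduct.map (tensorTensorTensorComm k A A A A).toLinearMap LinearMap.id ∘ₗ
          (tensorTensorTensorComm k (A ⊗[k] A) A (A ⊗[k] A) A).toLinearMap) ∘ₗ
          TensorProduct.map (TensorProduct.map Coalgebra.comul LinearMap.id)
            (TensorProduct.map Coalgebra.comul LinearMap.id) := by
    apply ext4
    intro x y u v
    simp only [LinearMap.comp_apply, LinearEquiv.coe_toLinearMap,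
      tensorTensorTensorComm_tmul, TensorProduct.map_tmul, LinearMap.id_coe, id_eq,
      dD2_tmul]
  have R1 : TensorProduct.map LinearMap.id (dD2 k A) ∘ₗ
        (tensorTensorTensorComm k A A A A).toLinearMap
      = (TensorProduct.map LinearMap.id (tensorTensorTensorComm k A A A A).toLinearMap ∘ₗ
          (tensorTensorTensorComm k A (A ⊗[k] A) A (A ⊗[k] A)).toLinearMap) ∘ₗ
          TensorProduct.map (TensorProduct.map LinearMap.id Coalgebra.comul)
            (TensorProduct.map LinearMap.id Coalgebra.comul) := by
    apply ext4
    intro x y u v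
    simp only [LinearMap.comp_apply, LinearEquiv.coe_toLinearMap,
      tensorTensorTensorComm_tmul, TensorProduct.map_tmul, LinearMap.id_coe, id_eq,
      dD2_tmul]
  have L2 : ((TensorProduct.assoc k (A ⊗[k] A) (A ⊗[k] A) (A ⊗[k] A)).toLinearMap ∘ₗ
          TensorProduct.map (tensorTensorTensorComm k A A A A).toLinearMap LinearMap.id ∘ₗ
          (tensorTensorTensorComm k (A ⊗[k] A) A (A ⊗[k] A) A).toLinearMap)
      = (TensorProduct.map LinearMap.id (tensorTensorTensorComm k A A A A).toLinearMap ∘ₗ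
          (tensorTensorTensorComm k A (A ⊗[k] A) A (A ⊗[k] A)).toLinearMap) ∘ₗ
          TensorProduct.map (TensorProduct.assoc k A A A).toLinearMap
            (TensorProduct.assoc k A A A).toLinearMap := by
    apply ext6
    intro a b c d e e'
    simp
  apply TensorProduct.ext'
  intro a b
  have hL := congr($(L1) ((Coalgebra.comul (R := k) a) ⊗ₜ (Coalgebra.comul (R := k) b)))
  rw [L2] at hL
  have hR := congr($(R1) ((Coalgebra.comul (R := k) a) ⊗ₜ (Coalgebra.comul (R := k) b)))
  simp only [LinearMap.comp_apply, LinearEquiv.coe_toLinearMap, TensorProduct.map_tmul] at hL hR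
  have h0 : ((TensorProduct.assoc k (A ⊗[k] A) (A ⊗[k] A) (A ⊗[k] A)).toLinearMap ∘ₗ
        TensorProduct.map (dD2 k A) LinearMap.id ∘ₗ dD2 k A) (a ⊗ₜ b)
      = (TensorProduct.assoc k (A ⊗[k] A) (A ⊗[k] A) (A ⊗[k] A))
          ((TensorProduct.map (dD2 k A) LinearMap.id)
            ((tensorTensorTensorComm k A A A A) ((Coalgebra.comul a) ⊗ₜ (Coalgebra.comul b)))) := by
    simp only [LinearMap.comp_apply, LinearEquiv.coe_toLinearMap, dD2,
      TensorProduct.map_tmul]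
  have h0' : (TensorProduct.map LinearMap.id (dD2 k A) ∘ₗ dD2 k A) (a ⊗ₜ b)
      = TensorProduct.map LinearMap.id (dD2 k A)
          ((tensorTensorTensorComm k A A A A) ((Coalgebra.comul a) ⊗ₜ (Coalgebra.comul b))) := by
    simp only [LinearMap.comp_apply, LinearEquiv.coe_toLinearMap, dD2,
      TensorProduct.map_tmul]
  rw [h0, h0', hL, hR]
  have ca : TensorProduct.map LinearMap.id (Coalgebra.comul (R := k)) (Coalgebra.comul a)
      = (TensorProduct.assoc k A A A)
          (TensorProduct.map (Coalgebra.comul (R := k)) LinearMap.id (Coalgebra.comul a)) :=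
    (Coalgebra.coassoc_apply (R := k) a).symm
  have cb : TensorProduct.map LinearMap.id (Coalgebra.comul (R := k)) (Coalgebra.comul b)
      = (TensorProduct.assoc k A A A)
          (TensorProduct.map (Coalgebra.comul (R := k)) LinearMap.id (Coalgebra.comul b)) :=
    (Coalgebra.coassoc_apply (R := k) b).symm
  rw [ca, cb]

end TensorSquare
section HopfLemmas
variable {k : Type*} [CommRing k] {A : Type*} [Ring A] [HopfAlgebra k A]

local notation "S" => HopfAlgebra.antipode (R := k) (A := A)

lemma coassocA : (TensorProduct.assoc k A A A).toLinearMap ∘ₗ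
      TensorProduct.map (Coalgebra.comul (R := k)) LinearMap.id ∘ₗ Coalgebra.comul
    = TensorProduct.map LinearMap.id (Coalgebra.comul (R := k)) ∘ₗ Coalgebra.comul :=
  Coalgebra.coassoc

lemma hreA : TensorProduct.map (Coalgebra.counit (R := k)) LinearMap.id ∘ₗ
      (Coalgebra.comul (R := k) (A := A)) = TensorProduct.mk k k A 1 :=
  Coalgebra.rTensor_counit_comp_comul

lemma hleA : TensorProduct.map LinearMap.id (Coalgebra.counit (R := k)) ∘ₗ
      (Coalgebra.comul (R := k) (A := A)) = (TensorProduct.mk k A k).flip 1 :=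
  Coalgebra.lTensor_counit_comp_comul

lemma mulSid (x : A) :
    LinearMap.mul' k A (TensorProduct.map S LinearMap.id (Coalgebra.comul x))
      = algebraMap k A (Coalgebra.counit x) :=
  HopfAlgebra.mul_antipode_rTensor_comul_apply x

lemma mulidS (x : A) :
    LinearMap.mul' k A (TensorProduct.map LinearMap.id S (Coalgebra.comul x))
      = algebraMap k A (Coalgebra.counit x) :=
  HopfAlgebra.mul_antipode_lTensor_comul_apply x

lemma antipode_one' : S (1 : A) = 1 := by
  have h := mulSid (k := k) (1 : A)
  rw [Bialgebra.comul_one, Algebra.TensorProduct.one_def] at h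
  simpa using h

lemma counit_antipode' (a : A) :
    Coalgebra.counit (R := k) (S a) = Coalgebra.counit (R := k) a := by
  set r := Coalgebra.Repr.arbitrary k a with hr
  have hsum : ∑ i ∈ r.index, Coalgebra.counit (R := k) (r.right i) • r.left i = a := by
    have h := congrArg (TensorProduct.rid k A) (Coalgebra.sum_tmul_counit_eq (R := k) r)
    rw [map_sum] at h
    simpa only [TensorProduct.rid_tmul, one_smul] using h
  have h2 := congrArg (Coalgebra.counit (R := k)) (mulSid (k := k) a)
  rw [← r.eq] at h2
  simp only [map_sum, TensorProduct.map_tmul, LinearMap.mul'_apply, LinearMap.id_coe, id_eq,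
    Bialgebra.counit_mul, Bialgebra.counit_algebraMap] at h2
  calc Coalgebra.counit (R := k) (S a)
      = Coalgebra.counit (R := k) (S (∑ i ∈ r.index,
          Coalgebra.counit (R := k) (r.right i) • r.left i)) := by rw [hsum]
    _ = ∑ i ∈ r.index, Coalgebra.counit (R := k) (S (r.left i)) *
          Coalgebra.counit (R := k) (r.right i) := by
        rw [map_sum, map_sum]
        refine Finset.sum_congr rfl fun i _ => ?_
        rw [map_smul, map_smul, smul_eq_mul, mul_comm]
    _ = Coalgebra.counit (R := k) a := h2

/-- The antipode is anti-multiplicative. -/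
theorem antipode_mul' (a b : A) : S (a * b) = S b * S a := by
  have M1 : LinearMap.mul' k A ∘ₗ
        TensorProduct.map (LinearMap.mul' k A) (S ∘ₗ LinearMap.mul' k A) ∘ₗ
        (tensorTensorTensorComm k A A A A).toLinearMap
      = LinearMap.mul' k A ∘ₗ TensorProduct.map LinearMap.id S ∘ₗ
        LinearMap.mul' k (A ⊗[k] A) := by
    apply ext4
    intro x y u v
    simp [Algebra.TensorProduct.tmul_mul_tmul]
  have h1 : conv (dD2 k A) (LinearMap.mul' k A) (S ∘ₗ LinearMap.mul' k A)
      = cunit (eD2 k A) := by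
    apply TensorProduct.ext'
    intro a b
    have hM := congr($(M1) ((Coalgebra.comul (R := k) a) ⊗ₜ (Coalgebra.comul (R := k) b)))
    simp only [LinearMap.comp_apply, LinearEquiv.coe_toLinearMap] at hM
    have e0 : conv (dD2 k A) (LinearMap.mul' k A) (S ∘ₗ LinearMap.mul' k A) (a ⊗ₜ b)
        = LinearMap.mul' k A (TensorProduct.map (LinearMap.mul' k A) (S ∘ₗ LinearMap.mul' k A)
            ((tensorTensorTensorComm k A A A A) ((Coalgebra.comul a) ⊗ₜ (Coalgebra.comul b)))) := by
      simp only [conv, LinearMap.comp_apply, dD2_tmul]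
    rw [e0, hM]
    have : LinearMap.mul' k (A ⊗[k] A) ((Coalgebra.comul (R := k) a) ⊗ₜ (Coalgebra.comul b))
        = Coalgebra.comul (R := k) (a * b) := by
      rw [LinearMap.mul'_apply, Bialgebra.comul_mul]
    rw [this, mulidS]
    simp [cunit, eD2_tmul]
  have h2 : conv (dD2 k A)
      (LinearMap.mul' k A ∘ₗ TensorProduct.map S S ∘ₗ (TensorProduct.comm k A A).toLinearMap)
      (LinearMap.mul' k A) = cunit (eD2 k A) := by
    apply TensorProduct.ext'
    intro a b
    set ra := Coalgebra.Repr.arbitrary k a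
    set rb := Coalgebra.Repr.arbitrary k b
    have e0 : conv (dD2 k A)
        (LinearMap.mul' k A ∘ₗ TensorProduct.map S S ∘ₗ (TensorProduct.comm k A A).toLinearMap)
        (LinearMap.mul' k A) (a ⊗ₜ b)
        = ∑ i ∈ ra.index, ∑ j ∈ rb.index,
            (S (rb.left j) * S (ra.left i)) * (ra.right i * rb.right j) := by
      simp only [conv, LinearMap.comp_apply, dD2_tmul, ← ra.eq, ← rb.eq]
      rw [TensorProduct.sum_tmul]
      rw [map_sum, map_sum, map_sum]
      refine Finset.sum_congr rfl fun i _ => ?_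
      rw [TensorProduct.tmul_sum, map_sum, map_sum, map_sum]
      refine Finset.sum_congr rfl fun j _ => ?_
      simp
    rw [e0]
    have e1 : ∀ j ∈ rb.index, ∑ i ∈ ra.index,
        (S (rb.left j) * S (ra.left i)) * (ra.right i * rb.right j)
        = S (rb.left j) * (algebraMap k A (Coalgebra.counit a) * rb.right j) := by
      intro j _
      rw [← HopfAlgebra.sum_antipode_mul_eq_algebraMap_counit (R := k) ra]
      rw [Finset.sum_mul, Finset.mul_sum]
      refine Finset.sum_congr rfl fun i _ => ?_
      simp only [mul_assoc]
    rw [Finset.sum_comm, Finset.sum_congr rfl e1]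
    have e2 : ∀ j ∈ rb.index,
        S (rb.left j) * (algebraMap k A (Coalgebra.counit a) * rb.right j)
        = algebraMap k A (Coalgebra.counit a) * (S (rb.left j) * rb.right j) := by
      intro j _
      rw [← mul_assoc, ← Algebra.commutes, mul_assoc]
    rw [Finset.sum_congr rfl e2, ← Finset.mul_sum, HopfAlgebra.sum_antipode_mul_eq_algebraMap_counit (R := k) rb]
    rw [← map_mul]
    simp [cunit, eD2_tmul]
  have huniq := conv_inv_unique (dD2 k A) (eD2 k A) hco2 hre2 hle2 h1 h2
  have := congr($(huniq) (a ⊗ₜ b))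
  simpa using this

end HopfLemmas
section HopfComul
variable {k : Type*} [CommRing k] {A : Type*} [Ring A] [HopfAlgebra k A]

local notation "S" => HopfAlgebra.antipode (R := k) (A := A)

/-- Auxiliary 4-leg contraction map. -/
noncomputable def thetaS : A ⊗[k] (A ⊗[k] (A ⊗[k] A)) →ₗ[k] A ⊗[k] A :=
  TensorProduct.map (LinearMap.mul' k A) (LinearMap.mul' k A) ∘ₗ
    (tensorTensorTensorComm k A A A A).toLinearMap ∘ₗ
    (TensorProduct.assoc k A A (A ⊗[k] A)).symm.toLinearMap ∘ₗ
    TensorProduct.map LinearMap.id (TensorProduct.map LinearMap.id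
      (TensorProduct.map S S ∘ₗ (TensorProduct.comm k A A).toLinearMap))

lemma thetaS_tmul (α β γ δ : A) :
    thetaS (α ⊗ₜ (β ⊗ₜ (γ ⊗ₜ δ))) = (α * S δ) ⊗ₜ[k] (β * S γ) := by
  simp [thetaS]

lemma thetaS_mul (p q : A) (t : A ⊗[k] A) :
    thetaS (p ⊗ₜ (q ⊗ₜ t))
      = (p ⊗ₜ[k] q) * (TensorProduct.map S S ((TensorProduct.comm k A A) t)) := by
  induction t using TensorProduct.induction_on with
  | zero =>
    rw [TensorProduct.tmul_zero, TensorProduct.tmul_zero, LinearMap.map_zero,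
      LinearEquiv.map_zero, LinearMap.map_zero, mul_zero]
  | tmul u v => rw [thetaS_tmul]; simp [Algebra.TensorProduct.tmul_mul_tmul]
  | add t₁ t₂ h₁ h₂ =>
    rw [TensorProduct.tmul_add, TensorProduct.tmul_add, map_add, map_add, map_add, mul_add,
      h₁, h₂]

theorem comul_antipode' (a : A) :
    Coalgebra.comul (R := k) (S a)
      = TensorProduct.map S S ((TensorProduct.comm k A A) (Coalgebra.comul a)) := by
  have h2' : conv (Coalgebra.comul (R := k) (A := A))
      ((Coalgebra.comul (R := k)) ∘ₗ S) (Coalgebra.comul (R := k))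
      = cunit Coalgebra.counit := by
    ext x
    set r := Coalgebra.Repr.arbitrary k x
    have e0 : conv (Coalgebra.comul (R := k) (A := A))
        ((Coalgebra.comul (R := k)) ∘ₗ S) (Coalgebra.comul (R := k)) x
        = ∑ i ∈ r.index, Coalgebra.comul (R := k) (S (r.left i) * r.right i) := by
      simp only [conv, LinearMap.comp_apply, ← r.eq, map_sum, TensorProduct.map_tmul,
        LinearMap.mul'_apply, LinearMap.comp_apply, Bialgebra.comul_mul]
    rw [e0, ← map_sum, HopfAlgebra.sum_antipode_mul_eq_algebraMap_counit (R := k) r]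
    simp only [cunit, LinearMap.comp_apply, Algebra.linearMap_apply]
    rw [Algebra.algebraMap_eq_smul_one, map_smul, Bialgebra.comul_one,
      Algebra.algebraMap_eq_smul_one]
  have h1' : conv (Coalgebra.comul (R := k) (A := A))
      (Coalgebra.comul (R := k))
      (TensorProduct.map S S ∘ₗ (TensorProduct.comm k A A).toLinearMap ∘ₗ
        Coalgebra.comul (R := k))
      = cunit Coalgebra.counit := by
    ext a
    set r := Coalgebra.Repr.arbitrary k a with hrdef
    set rL : (i : A × A) → Coalgebra.Repr k (r.left i) (A × A) :=
      fun i => Coalgebra.Repr.arbitrary k (r.left i) with hrL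
    set rR : (i : A × A) → Coalgebra.Repr k (r.right i) (A × A) :=
      fun i => Coalgebra.Repr.arbitrary k (r.right i) with hrR
    set rRL : (i : A × A) → (s : A × A) → Coalgebra.Repr k ((rR i).left s) (A × A) :=
      fun i s => Coalgebra.Repr.arbitrary k ((rR i).left s) with hrRL
    -- step 0: expand the convolution
    have e0 : conv (Coalgebra.comul (R := k) (A := A))
        (Coalgebra.comul (R := k))
        (TensorProduct.map S S ∘ₗ (TensorProduct.comm k A A).toLinearMap ∘ₗ
          Coalgebra.comul (R := k)) a
        = ∑ i ∈ r.index, Coalgebra.comul (R := k) (r.left i) *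
            (TensorProduct.map S S ((TensorProduct.comm k A A)
              (Coalgebra.comul (R := k) (r.right i)))) := by
      simp only [conv, LinearMap.comp_apply, ← r.eq, map_sum, TensorProduct.map_tmul,
        LinearMap.mul'_apply, LinearMap.comp_apply, LinearEquiv.coe_toLinearMap]
    -- step 1: rewrite each term through thetaS
    have e1 : ∀ i ∈ r.index, Coalgebra.comul (R := k) (r.left i) *
          (TensorProduct.map S S ((TensorProduct.comm k A A)
            (Coalgebra.comul (R := k) (r.right i))))
        = thetaS (∑ j ∈ (rL i).index,
            (rL i).left j ⊗ₜ ((rL i).right j ⊗ₜ Coalgebra.comul (R := k) (r.right i))) := by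
      intro i _
      rw [← (rL i).eq, Finset.sum_mul, map_sum]
      exact Finset.sum_congr rfl fun j _ => (thetaS_mul _ _ _).symm
    rw [e0, Finset.sum_congr rfl e1, ← map_sum]
    -- step 2: coassociativity shuffle
    have key := Coalgebra.sum_tmul_tmul_eq (R := k) r rL rR
    have e2 : ∑ i ∈ r.index, ∑ j ∈ (rL i).index,
          (rL i).left j ⊗ₜ[k] ((rL i).right j ⊗ₜ[k] Coalgebra.comul (R := k) (r.right i))
        = ∑ i ∈ r.index, ∑ s ∈ (rR i).index,
          r.left i ⊗ₜ[k] ((rR i).left s ⊗ₜ[k] Coalgebra.comul (R := k) ((rR i).right s)) := by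
      have := congrArg (TensorProduct.map (LinearMap.id (R := k) (M := A))
        (TensorProduct.map LinearMap.id (Coalgebra.comul (R := k)))) key
      simpa only [map_sum, TensorProduct.map_tmul, LinearMap.id_coe, id_eq] using this
    have e2' : (∑ i ∈ r.index, ∑ j ∈ (rL i).index,
          (rL i).left j ⊗ₜ[k] ((rL i).right j ⊗ₜ[k] Coalgebra.comul (R := k) (r.right i)))
        = ∑ i ∈ r.index, ∑ s ∈ (rR i).index, ∑ t ∈ (rRL i s).index,
          r.left i ⊗ₜ[k] ((rRL i s).left t ⊗ₜ[k]
            ((rRL i s).right t ⊗ₜ[k] (rR i).right s)) := by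
      rw [e2]
      refine Finset.sum_congr rfl fun i _ => ?_
      have e3 : ∑ s ∈ (rR i).index,
            (rR i).left s ⊗ₜ[k] Coalgebra.comul (R := k) ((rR i).right s)
          = ∑ s ∈ (rR i).index, ∑ t ∈ (rRL i s).index,
            (rRL i s).left t ⊗ₜ[k] ((rRL i s).right t ⊗ₜ[k] (rR i).right s) := by
        have hco : (TensorProduct.assoc k A A A)
              (TensorProduct.map (Coalgebra.comul (R := k)) LinearMap.id
                (Coalgebra.comul (R := k) (r.right i)))
            = TensorProduct.map LinearMap.id (Coalgebra.comul (R := k))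
                (Coalgebra.comul (R := k) (r.right i)) :=
          Coalgebra.coassoc_apply (R := k) (r.right i)
        have hl : TensorProduct.map LinearMap.id (Coalgebra.comul (R := k))
              (Coalgebra.comul (R := k) (r.right i))
            = ∑ s ∈ (rR i).index,
              (rR i).left s ⊗ₜ[k] Coalgebra.comul (R := k) ((rR i).right s) := by
          rw [← (rR i).eq, map_sum]
          simp
        have hr : (TensorProduct.assoc k A A A)
              (TensorProduct.map (Coalgebra.comul (R := k)) LinearMap.id
                (Coalgebra.comul (R := k) (r.right i)))
            = ∑ s ∈ (rR i).index, ∑ t ∈ (rRL i s).index,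
              (rRL i s).left t ⊗ₜ[k] ((rRL i s).right t ⊗ₜ[k] (rR i).right s) := by
          rw [← (rR i).eq, map_sum, map_sum]
          refine Finset.sum_congr rfl fun s _ => ?_
          rw [TensorProduct.map_tmul, ← (rRL i s).eq, TensorProduct.sum_tmul, map_sum]
          simp
        rw [← hl, ← hco, hr]
      rw [← TensorProduct.tmul_sum, e3, TensorProduct.tmul_sum]
      refine Finset.sum_congr rfl fun s _ => ?_
      rw [TensorProduct.tmul_sum]
    rw [e2', map_sum]
    -- step 3: contract the middle pair
    have e4 : ∀ i ∈ r.index, thetaS (∑ s ∈ (rR i).index, ∑ t ∈ (rRL i s).index,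
          r.left i ⊗ₜ[k] ((rRL i s).left t ⊗ₜ[k]
            ((rRL i s).right t ⊗ₜ[k] (rR i).right s)))
        = (r.left i * S (r.right i)) ⊗ₜ[k] (1 : A) := by
      intro i _
      rw [map_sum]
      have e5 : ∀ s ∈ (rR i).index, thetaS (∑ t ∈ (rRL i s).index,
            r.left i ⊗ₜ[k] ((rRL i s).left t ⊗ₜ[k]
              ((rRL i s).right t ⊗ₜ[k] (rR i).right s)))
          = Coalgebra.counit (R := k) ((rR i).left s) •
              ((r.left i * S ((rR i).right s)) ⊗ₜ[k] (1 : A)) := by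
        intro s _
        rw [map_sum]
        have : ∀ t ∈ (rRL i s).index, thetaS
              (r.left i ⊗ₜ[k] ((rRL i s).left t ⊗ₜ[k]
                ((rRL i s).right t ⊗ₜ[k] (rR i).right s)))
            = (r.left i * S ((rR i).right s)) ⊗ₜ[k]
                ((rRL i s).left t * S ((rRL i s).right t)) := by
          intro t _
          rw [thetaS_tmul]
        rw [Finset.sum_congr rfl this, ← TensorProduct.tmul_sum,
          HopfAlgebra.sum_mul_antipode_eq_algebraMap_counit (R := k) (rRL i s),
          Algebra.algebraMap_eq_smul_one, TensorProduct.tmul_smul]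
      rw [Finset.sum_congr rfl e5]
      have hsum : ∑ s ∈ (rR i).index,
          Coalgebra.counit (R := k) ((rR i).left s) • (rR i).right s = r.right i := by
        have h := congrArg (TensorProduct.lid k A) (Coalgebra.sum_counit_tmul_eq (R := k) (rR i))
        rw [map_sum] at h
        simpa only [TensorProduct.lid_tmul, one_smul] using h
      calc ∑ s ∈ (rR i).index, Coalgebra.counit (R := k) ((rR i).left s) •
            ((r.left i * S ((rR i).right s)) ⊗ₜ[k] (1 : A))
          = ∑ s ∈ (rR i).index, (r.left i *
              S (Coalgebra.counit (R := k) ((rR i).left s) • (rR i).right s)) ⊗ₜ[k] (1 : A) := by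
            refine Finset.sum_congr rfl fun s _ => ?_
            rw [map_smul, mul_smul_comm, TensorProduct.smul_tmul']
        _ = (r.left i * S (r.right i)) ⊗ₜ[k] (1 : A) := by
            rw [← TensorProduct.sum_tmul, ← Finset.mul_sum, ← map_sum, hsum]
    rw [Finset.sum_congr rfl e4, ← TensorProduct.sum_tmul,
      HopfAlgebra.sum_mul_antipode_eq_algebraMap_counit (R := k) r]
    simp only [cunit, LinearMap.comp_apply, Algebra.linearMap_apply,
      Algebra.TensorProduct.algebraMap_apply]
  have huniq := conv_inv_unique (Coalgebra.comul (R := k) (A := A)) Coalgebra.counit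
    coassocA hreA hleA h1' h2'
  exact (congr($(huniq) a)).symm

end HopfComul
section RhoComm
variable {k : Type*} [CommRing k] {B C : Type*} [Ring B] [HopfAlgebra k B]
  [Ring C] [HopfAlgebra k C]

theorem map_antipode' (ρ : B →ₐc[k] C) (b : B) :
    HopfAlgebra.antipode (R := k) (ρ b) = ρ (HopfAlgebra.antipode (R := k) b) := by
  have h1 : conv (Coalgebra.comul (R := k) (A := B)) (ρ : B →ₗ[k] C)
      ((ρ : B →ₗ[k] C) ∘ₗ HopfAlgebra.antipode (R := k)) = cunit Coalgebra.counit := by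
    ext x
    set r := Coalgebra.Repr.arbitrary k x
    have e0 : conv (Coalgebra.comul (R := k) (A := B)) (ρ : B →ₗ[k] C)
        ((ρ : B →ₗ[k] C) ∘ₗ HopfAlgebra.antipode (R := k)) x
        = ∑ i ∈ r.index, ρ (r.left i) * ρ (HopfAlgebra.antipode (R := k) (r.right i)) := by
      simp only [conv, LinearMap.comp_apply, ← r.eq, map_sum, TensorProduct.map_tmul,
        LinearMap.mul'_apply, LinearMap.comp_apply, LinearMap.coe_coe]
    have e0b : ∑ i ∈ r.index, ρ (r.left i) * ρ (HopfAlgebra.antipode (R := k) (r.right i))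
        = ∑ i ∈ r.index, ρ (r.left i * HopfAlgebra.antipode (R := k) (r.right i)) :=
      Finset.sum_congr rfl fun i _ => (map_mul ρ _ _).symm
    rw [e0b] at e0
    rw [e0, ← map_sum, HopfAlgebra.sum_mul_antipode_eq_algebraMap_counit (R := k) r]
    simp [cunit, AlgHomClass.commutes]
  have h2 : conv (Coalgebra.comul (R := k) (A := B))
      ((HopfAlgebra.antipode (R := k)) ∘ₗ (ρ : B →ₗ[k] C)) (ρ : B →ₗ[k] C)
      = cunit Coalgebra.counit := by
    ext x
    have e0 : conv (Coalgebra.comul (R := k) (A := B))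
        ((HopfAlgebra.antipode (R := k)) ∘ₗ (ρ : B →ₗ[k] C)) (ρ : B →ₗ[k] C) x
        = LinearMap.mul' k C (TensorProduct.map (HopfAlgebra.antipode (R := k)) LinearMap.id
            (TensorProduct.map (ρ : B →ₗ[k] C) (ρ : B →ₗ[k] C)
              (Coalgebra.comul (R := k) x))) := by
      simp only [conv, LinearMap.comp_apply, map_map, LinearMap.comp_id, LinearMap.id_comp]
    have hcm : TensorProduct.map (ρ : B →ₗ[k] C) (ρ : B →ₗ[k] C) (Coalgebra.comul (R := k) x)
        = Coalgebra.comul (R := k) (ρ x) := congr($(CoalgHomClass.map_comp_comul ρ) x)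
    rw [e0, hcm, mulSid]
    have hcc : Coalgebra.counit (R := k) (ρ x) = Coalgebra.counit (R := k) x :=
      congr($(CoalgHomClass.counit_comp ρ) x)
    simp [cunit, hcc]
  have huniq := conv_inv_unique (Coalgebra.comul (R := k) (A := B)) Coalgebra.counit
    coassocA hreA hleA h1 h2
  exact (congr($(huniq) b)).symm

end RhoComm

section MorAnti
variable {k : Type*} [CommRing k] {A : Type*} [Ring A] [HopfAlgebra k A]

/-- Bialgebra endomorphism (unital, multiplicative, counital, comultiplicative). -/
def IsBiMor (f : A →ₗ[k] A) : Prop :=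
  f 1 = 1 ∧ (∀ x y, f (x * y) = f x * f y) ∧
  (∀ x, Coalgebra.counit (R := k) (f x) = Coalgebra.counit (R := k) x) ∧
  (∀ x, Coalgebra.comul (R := k) (f x) = TensorProduct.map f f (Coalgebra.comul (R := k) x))

/-- Bialgebra anti-endomorphism. -/
def IsBiAnti (f : A →ₗ[k] A) : Prop :=
  f 1 = 1 ∧ (∀ x y, f (x * y) = f y * f x) ∧
  (∀ x, Coalgebra.counit (R := k) (f x) = Coalgebra.counit (R := k) x) ∧
  (∀ x, Coalgebra.comul (R := k) (f x)
    = TensorProduct.map f f ((TensorProduct.comm k A A) (Coalgebra.comul (R := k) x)))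

lemma comm_comm {M N : Type*} [AddCommMonoid M] [AddCommMonoid N] [Module k M] [Module k N]
    (t : M ⊗[k] N) : (TensorProduct.comm k N M) ((TensorProduct.comm k M N) t) = t := by
  induction t using TensorProduct.induction_on with
  | zero => simp
  | tmul x y => simp
  | add t₁ t₂ h₁ h₂ => simp [map_add, h₁, h₂]

lemma comm_map {M N P Q : Type*} [AddCommMonoid M] [AddCommMonoid N] [AddCommMonoid P]
    [AddCommMonoid Q] [Module k M] [Module k N] [Module k P] [Module k Q]
    (f : M →ₗ[k] P) (g : N →ₗ[k] Q) (t : M ⊗[k] N) :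
    (TensorProduct.comm k P Q) (TensorProduct.map f g t)
      = TensorProduct.map g f ((TensorProduct.comm k M N) t) := by
  induction t using TensorProduct.induction_on with
  | zero => simp
  | tmul x y => simp
  | add t₁ t₂ h₁ h₂ => simp [map_add, h₁, h₂]

lemma isBiAnti_antipode : IsBiAnti (HopfAlgebra.antipode (R := k) (A := A)) :=
  ⟨antipode_one', antipode_mul', counit_antipode', comul_antipode'⟩

lemma IsBiMor.id : IsBiMor (LinearMap.id (R := k) (M := A)) := by
  refine ⟨rfl, fun _ _ => rfl, fun _ => rfl, fun x => ?_⟩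
  simp

lemma mor_comp_mor {f g : A →ₗ[k] A} (hf : IsBiMor f) (hg : IsBiMor g) :
    IsBiMor (f ∘ₗ g) := by
  obtain ⟨hf1, hfm, hfc, hfd⟩ := hf
  obtain ⟨hg1, hgm, hgc, hgd⟩ := hg
  refine ⟨by simp [hg1, hf1], fun x y => by simp [hgm, hfm], fun x => by simp [hgc, hfc],
    fun x => ?_⟩
  simp only [LinearMap.comp_apply, hfd, hgd, map_map]

lemma anti_comp_anti {f g : A →ₗ[k] A} (hf : IsBiAnti f) (hg : IsBiAnti g) :
    IsBiMor (f ∘ₗ g) := by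
  obtain ⟨hf1, hfm, hfc, hfd⟩ := hf
  obtain ⟨hg1, hgm, hgc, hgd⟩ := hg
  refine ⟨by simp [hg1, hf1], fun x y => by simp [hgm, hfm], fun x => by simp [hgc, hfc],
    fun x => ?_⟩
  simp only [LinearMap.comp_apply, hfd, hgd]
  rw [comm_map, comm_comm, map_map]

lemma mor_comp_anti {f g : A →ₗ[k] A} (hf : IsBiMor f) (hg : IsBiAnti g) :
    IsBiAnti (f ∘ₗ g) := by
  obtain ⟨hf1, hfm, hfc, hfd⟩ := hf
  obtain ⟨hg1, hgm, hgc, hgd⟩ := hg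
  refine ⟨by simp [hg1, hf1], fun x y => by simp [hgm, hfm], fun x => by simp [hgc, hfc],
    fun x => ?_⟩
  simp only [LinearMap.comp_apply, hfd, hgd, map_map]

end MorAnti
section Pow
variable {k : Type*} [CommRing k] {A : Type*} [Ring A] [HopfAlgebra k A]

lemma isBiAnti_symm (e : A ≃ₗ[k] A) (he : IsBiAnti (e.toLinearMap : A →ₗ[k] A)) :
    IsBiAnti (e.symm.toLinearMap : A →ₗ[k] A) := by
  obtain ⟨h1, hm, hc, hd⟩ := he
  simp only [LinearEquiv.coe_toLinearMap, LinearEquiv.coe_coe] at h1 hm hc hd ⊢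
  have hmap : ∀ t : A ⊗[k] A, TensorProduct.map e.symm.toLinearMap e.symm.toLinearMap
      (TensorProduct.map e.toLinearMap e.toLinearMap t) = t := by
    intro t
    rw [map_map]
    have hcmp : (e.symm.toLinearMap ∘ₗ e.toLinearMap : A →ₗ[k] A) = LinearMap.id := by
      ext x; simp
    rw [hcmp]
    simp
  refine ⟨?_, ?_, ?_, ?_⟩
  · simp only [LinearEquiv.coe_coe]
    apply e.injective; rw [e.apply_symm_apply, h1]
  · intro x y
    simp only [LinearEquiv.coe_coe]
    apply e.injective
    rw [e.apply_symm_apply, hm (e.symm y) (e.symm x), e.apply_symm_apply, e.apply_symm_apply]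
  · intro x
    simp only [LinearEquiv.coe_coe]
    conv_rhs => rw [← e.apply_symm_apply x]
    rw [hc]
  · intro x
    simp only [LinearEquiv.coe_coe]
    have h := hd (e.symm x)
    rw [e.apply_symm_apply] at h
    have h2 := congrArg (TensorProduct.map e.symm.toLinearMap e.symm.toLinearMap) h
    rw [hmap] at h2
    have h3 := congrArg (TensorProduct.comm k A A) h2.symm
    rw [comm_comm] at h3
    rw [h3, comm_map]

lemma toLinearMap_mul (e f : A ≃ₗ[k] A) :
    ((e * f).toLinearMap : A →ₗ[k] A) = e.toLinearMap ∘ₗ f.toLinearMap := rfl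

theorem isBi_zpow (e : A ≃ₗ[k] A) (he : IsBiAnti (e.toLinearMap : A →ₗ[k] A)) (n : ℤ) :
    (Odd n → IsBiAnti ((e ^ n).toLinearMap : A →ₗ[k] A)) ∧
    (Even n → IsBiMor ((e ^ n).toLinearMap : A →ₗ[k] A)) := by
  have hsymm := isBiAnti_symm e he
  induction n using Int.induction_on with
  | zero =>
    constructor
    · intro h; rw [Int.odd_iff] at h; omega
    · intro _
      have h0 : ((e ^ (0 : ℤ)).toLinearMap : A →ₗ[k] A) = LinearMap.id := by
        rw [zpow_zero]; rfl
      rw [h0]; exact IsBiMor.id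
  | succ i ih =>
    have hstep : ((e ^ ((i : ℤ) + 1)).toLinearMap : A →ₗ[k] A)
        = (e ^ (i : ℤ)).toLinearMap ∘ₗ e.toLinearMap := by
      rw [zpow_add_one]; rfl
    constructor
    · intro hodd
      have heven : Even (i : ℤ) := by
        rw [Int.odd_iff] at hodd; rw [Int.even_iff]; omega
      rw [hstep]; exact mor_comp_anti (ih.2 heven) he
    · intro heven
      have hodd : Odd (i : ℤ) := by
        rw [Int.even_iff] at heven; rw [Int.odd_iff]; omega
      rw [hstep]; exact anti_comp_anti (ih.1 hodd) he
  | pred i ih =>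
    have hstep : ((e ^ (-(i : ℤ) - 1)).toLinearMap : A →ₗ[k] A)
        = (e ^ (-(i : ℤ))).toLinearMap ∘ₗ e.symm.toLinearMap := by
      rw [zpow_sub_one]; rfl
    constructor
    · intro hodd
      have heven : Even (-(i : ℤ)) := by
        rw [Int.odd_iff] at hodd; rw [Int.even_iff]; omega
      rw [hstep]; exact mor_comp_anti (ih.2 heven) hsymm
    · intro heven
      have hodd : Odd (-(i : ℤ)) := by
        rw [Int.even_iff] at heven; rw [Int.odd_iff]; omega
      rw [hstep]; exact anti_comp_anti (ih.1 hodd) hsymm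

lemma zpow_apply_add (e : A ≃ₗ[k] A) (m n : ℤ) (x : A) :
    (e ^ (m + n)) x = (e ^ m) ((e ^ n) x) := by rw [zpow_add]; rfl

end Pow

section RhoPow
variable {k : Type*} [CommRing k] {B C : Type*} [Ring B] [HopfAlgebra k B]
  [Ring C] [HopfAlgebra k C]

theorem rho_zpow (ρ : B →ₐc[k] C) (eB : B ≃ₗ[k] B) (eC : C ≃ₗ[k] C)
    (hB : ∀ x, eB x = HopfAlgebra.antipode (R := k) x)
    (hC : ∀ x, eC x = HopfAlgebra.antipode (R := k) x) (n : ℤ) :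
    ∀ (x : B), ρ ((eB ^ n) x) = (eC ^ n) (ρ x) := by
  have h1 : ∀ x, ρ (eB x) = eC (ρ x) := fun x => by
    rw [hB, hC]; exact (map_antipode' ρ x).symm
  have h2 : ∀ x, ρ (eB.symm x) = eC.symm (ρ x) := fun x => by
    apply eC.injective
    rw [eC.apply_symm_apply, ← h1, eB.apply_symm_apply]
  induction n using Int.induction_on with
  | zero => intro x; simp
  | succ i ih =>
    intro x
    have hs : (eB ^ ((i : ℤ) + 1)) x = (eB ^ (i : ℤ)) (eB x) := by rw [zpow_add_one]; rfl
    have hs' : (eC ^ ((i : ℤ) + 1)) (ρ x) = (eC ^ (i : ℤ)) (eC (ρ x)) := by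
      rw [zpow_add_one]; rfl
    rw [hs, hs', ih (eB x), h1]
  | pred i ih =>
    intro x
    have hs : (eB ^ (-(i : ℤ) - 1)) x = (eB ^ (-(i : ℤ))) (eB.symm x) := by
      rw [zpow_sub_one]; rfl
    have hs' : (eC ^ (-(i : ℤ) - 1)) (ρ x) = (eC ^ (-(i : ℤ))) (eC.symm (ρ x)) := by
      rw [zpow_sub_one]; rfl
    rw [hs, hs', ih (eB.symm x), h2]

end RhoPow

end YD
end Machinery

section

variable (k : Type*) [Field k] (B C M : Type*)
  [Ring B] [HopfAlgebra k B] [Ring C] [HopfAlgebra k C]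
  [AddCommGroup M] [Module k M]

/-- The left `B`-action `b·m := m · S^{-l}(b)` obtained from a right `B`-action
`μM` (here `eB` is the antipode of `B` as a linear automorphism, and `l : ℤ`). -/
noncomputable def SlAct (eB : B ≃ₗ[k] B) (l : ℤ) (μM : M →ₗ[k] B →ₗ[k] M)
    (b : B) (m : M) : M :=
  μM m ((eB ^ (-l)) b)

/-- The left `C`-coaction `δ'(m) := S^l(m₍₁₎) ⊗ m₍₀₎` obtained from a right
`C`-coaction `δ` (here `eC` is the antipode of `C` as a linear automorphism). -/
noncomputable def SlCoact (eC : C ≃ₗ[k] C) (l : ℤ) (δ : M →ₗ[k] M ⊗[k] C) :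
    M →ₗ[k] C ⊗[k] M :=
  (TensorProduct.map (eC ^ l).toLinearMap LinearMap.id) ∘ₗ
    (TensorProduct.comm k M C).toLinearMap ∘ₗ δ

/-- **Lemma.** Let `ρ : B → C` be a morphism of Hopf algebras with bijective
antipodes, `l` an odd integer, and `M` a right relative Yetter–Drinfeld module
(right `B`-module and right `C`-comodule with
`δ(m·b) = m₍₀₎·b₍₂₎ ⊗ S(ρ(b₍₁₎)) m₍₁₎ ρ(b₍₃₎)`).  Then `b·m := m·S^{-l}(b)` and
`δ'(m) := S^l(m₍₁₎) ⊗ m₍₀₎` make `M` a left `B`-module and a coassociative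
counital left `C`-comodule satisfying the left relative Yetter–Drinfeld condition
`δ'(b·m) = ρ(b₍₁₎) m'₍₋₁₎ ρ(S(b₍₃₎)) ⊗ b₍₂₎·m'₍₀₎`. -/
theorem right_to_left_relative_yetter_drinfeld
    (eB : B ≃ₗ[k] B) (heB : ∀ b : B, eB b = HopfAlgebra.antipode (R := k) b)
    (eC : C ≃ₗ[k] C) (heC : ∀ c : C, eC c = HopfAlgebra.antipode (R := k) c)
    (ρ : B →ₐc[k] C) (l : ℤ) (hl : Odd l)
    (μM : M →ₗ[k] B →ₗ[k] M) (δ : M →ₗ[k] M ⊗[k] C)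
    -- `μM` is a right module structure
    (hμ₁ : ∀ m : M, μM m 1 = m)
    (hμmul : ∀ (m : M) (b b' : B), μM m (b * b') = μM (μM m b) b')
    -- `δ` is a coassociative counital right comodule structure
    (hδcoassoc : ∀ m : M,
      (TensorProduct.assoc k M C C) ((TensorProduct.map δ LinearMap.id) (δ m)) =
        (TensorProduct.map LinearMap.id (Coalgebra.comul (R := k))) (δ m))
    (hδcounit : ∀ m : M,
      (TensorProduct.rid k M)
          ((TensorProduct.map LinearMap.id (Coalgebra.counit (R := k))) (δ m)) = m)
    -- the right relative Yetter–Drinfeld condition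
    (hyd : ∀ (m : M) (b : B) (n : ℕ) (m₀ : Fin n → M) (m₁ : Fin n → C),
      δ m = ∑ i, m₀ i ⊗ₜ[k] m₁ i →
      ∀ (p : ℕ) (b₁ b₂ b₃ : Fin p → B),
        (TensorProduct.map (Coalgebra.comul (R := k)) LinearMap.id)
            (Coalgebra.comul (R := k) b) = ∑ j, (b₁ j ⊗ₜ[k] b₂ j) ⊗ₜ[k] b₃ j →
        δ (μM m b) = ∑ j, ∑ i, μM (m₀ i) (b₂ j) ⊗ₜ[k]
          (HopfAlgebra.antipode (R := k) (ρ (b₁ j)) * m₁ i * ρ (b₃ j))) :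
    -- `b·m = m·S^{-l}(b)` is a left module structure
    (∀ m : M, SlAct k B M eB l μM 1 m = m) ∧
    (∀ (b b' : B) (m : M),
      SlAct k B M eB l μM (b * b') m = SlAct k B M eB l μM b (SlAct k B M eB l μM b' m)) ∧
    -- `δ'` is a coassociative counital left comodule structure
    (∀ m : M,
      (TensorProduct.assoc k C C M)
          ((TensorProduct.map (Coalgebra.comul (R := k)) LinearMap.id)
            (SlCoact k C M eC l δ m)) =
        (TensorProduct.map LinearMap.id (SlCoact k C M eC l δ)) (SlCoact k C M eC l δ m)) ∧
    (∀ m : M,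
      (TensorProduct.lid k M)
          ((TensorProduct.map (Coalgebra.counit (R := k)) LinearMap.id)
            (SlCoact k C M eC l δ m)) = m) ∧
    -- the left relative Yetter–Drinfeld condition
    (∀ (b : B) (m : M) (p : ℕ) (b₁ b₂ b₃ : Fin p → B),
      (TensorProduct.map (Coalgebra.comul (R := k)) LinearMap.id)
          (Coalgebra.comul (R := k) b) = ∑ j, (b₁ j ⊗ₜ[k] b₂ j) ⊗ₜ[k] b₃ j →
      ∀ (n : ℕ) (c : Fin n → C) (w : Fin n → M),
        SlCoact k C M eC l δ m = ∑ i, c i ⊗ₜ[k] w i →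
        SlCoact k C M eC l δ (SlAct k B M eB l μM b m) = ∑ j, ∑ i,
          (ρ (b₁ j) * c i * ρ (HopfAlgebra.antipode (R := k) (b₃ j))) ⊗ₜ[k]
            SlAct k B M eB l μM (b₂ j) (w i)) := by
  classical
  have hanB : YD.IsBiAnti ((eB.toLinearMap : B →ₗ[k] B)) := by
    have hEq : (eB.toLinearMap : B →ₗ[k] B) = HopfAlgebra.antipode (R := k) :=
      LinearMap.ext heB
    rw [hEq]; exact YD.isBiAnti_antipode
  have hanC : YD.IsBiAnti ((eC.toLinearMap : C →ₗ[k] C)) := by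
    have hEq : (eC.toLinearMap : C →ₗ[k] C) = HopfAlgebra.antipode (R := k) :=
      LinearMap.ext heC
    rw [hEq]; exact YD.isBiAnti_antipode
  have hgB : YD.IsBiAnti (((eB ^ (-l)).toLinearMap : B →ₗ[k] B)) :=
    (YD.isBi_zpow eB hanB (-l)).1 hl.neg
  have hEC : YD.IsBiAnti (((eC ^ l).toLinearMap : C →ₗ[k] C)) :=
    (YD.isBi_zpow eC hanC l).1 hl
  have hgB1 : (eB ^ (-l)) (1 : B) = 1 := hgB.1
  have hgBm : ∀ x y : B, (eB ^ (-l)) (x * y) = (eB ^ (-l)) y * (eB ^ (-l)) x := hgB.2.1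
  have hgBd : ∀ x : B, Coalgebra.comul (R := k) ((eB ^ (-l)) x)
      = TensorProduct.map (eB ^ (-l)).toLinearMap (eB ^ (-l)).toLinearMap
          ((TensorProduct.comm k B B) (Coalgebra.comul (R := k) x)) := hgB.2.2.2
  have hECm : ∀ x y : C, (eC ^ l) (x * y) = (eC ^ l) y * (eC ^ l) x := hEC.2.1
  have hECc : ∀ x : C, Coalgebra.counit (R := k) ((eC ^ l) x)
      = Coalgebra.counit (R := k) x := hEC.2.2.1
  have hECd : ∀ x : C, Coalgebra.comul (R := k) ((eC ^ l) x)
      = TensorProduct.map (eC ^ l).toLinearMap (eC ^ l).toLinearMap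
          ((TensorProduct.comm k C C) (Coalgebra.comul (R := k) x)) := hEC.2.2.2
  -- the coaction applied to a decomposed element
  have hslgen : ∀ (m : M) (n' : ℕ) (xx : Fin n' → M) (yy : Fin n' → C),
      δ m = ∑ i, xx i ⊗ₜ[k] yy i →
      SlCoact k C M eC l δ m = ∑ i, (eC ^ l) (yy i) ⊗ₜ[k] xx i := by
    intro m n' xx yy hdec
    rw [SlCoact]
    simp only [LinearMap.comp_apply, LinearEquiv.coe_toLinearMap, hdec, map_sum,
      TensorProduct.comm_tmul, TensorProduct.map_tmul, LinearMap.id_coe, id_eq,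
      LinearEquiv.coe_coe]
  refine ⟨?_, ?_, ?_, ?_, ?_⟩
  · -- unit acts trivially
    intro m
    show μM m ((eB ^ (-l)) 1) = m
    rw [hgB1, hμ₁]
  · -- multiplicativity of the left action
    intro b b' m
    show μM m ((eB ^ (-l)) (b * b'))
      = μM (μM m ((eB ^ (-l)) b')) ((eB ^ (-l)) b)
    rw [hgBm b b', hμmul]
  · -- coassociativity of the left coaction
    intro m
    obtain ⟨n', xx, yy, hdec⟩ := YD.exists_fin (δ m)
    have hsl := hslgen m n' xx yy hdec
    set E := ((eC ^ l).toLinearMap : C →ₗ[k] C) with hE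
    set K : M ⊗[k] (C ⊗[k] C) →ₗ[k] C ⊗[k] (C ⊗[k] M) :=
      TensorProduct.map E (TensorProduct.map E LinearMap.id) ∘ₗ
        (TensorProduct.assoc k C C M).toLinearMap ∘ₗ
        TensorProduct.map (TensorProduct.comm k C C).toLinearMap LinearMap.id ∘ₗ
        (TensorProduct.comm k M (C ⊗[k] C)).toLinearMap with hK
    have KA : ∀ (x : M) (t : C ⊗[k] C), K (x ⊗ₜ t)
        = (TensorProduct.assoc k C C M)
            ((TensorProduct.map E E ((TensorProduct.comm k C C) t)) ⊗ₜ x) := by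
      intro x t
      induction t using TensorProduct.induction_on with
      | zero => simp [hK, TensorProduct.tmul_zero, TensorProduct.zero_tmul]
      | tmul c c' => simp [hK]
      | add t₁ t₂ h₁ h₂ =>
        simp only [TensorProduct.tmul_add, TensorProduct.add_tmul, map_add, h₁, h₂]
    have KB : ∀ (c : C) (t : M ⊗[k] C), K ((TensorProduct.assoc k M C C) (t ⊗ₜ c))
        = E c ⊗ₜ (TensorProduct.map E LinearMap.id ((TensorProduct.comm k M C) t)) := by
      intro c t
      induction t using TensorProduct.induction_on with
      | zero => simp [hK, TensorProduct.tmul_zero, TensorProduct.zero_tmul]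
      | tmul m₀ c₀ => simp [hK]
      | add t₁ t₂ h₁ h₂ =>
        simp only [TensorProduct.tmul_add, TensorProduct.add_tmul, map_add, h₁, h₂]
    have hbridge := hδcoassoc m
    have hLHS : (TensorProduct.assoc k C C M)
        ((TensorProduct.map (Coalgebra.comul (R := k)) LinearMap.id)
          (SlCoact k C M eC l δ m))
        = K ((TensorProduct.map LinearMap.id (Coalgebra.comul (R := k))) (δ m)) := by
      rw [hsl, hdec, map_sum, map_sum, map_sum, map_sum]
      refine Finset.sum_congr rfl fun i _ => ?_
      rw [TensorProduct.map_tmul, TensorProduct.map_tmul, KA]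
      rw [hECd (yy i)]
    have hRHS : (TensorProduct.map LinearMap.id (SlCoact k C M eC l δ))
        (SlCoact k C M eC l δ m)
        = K ((TensorProduct.assoc k M C C)
            ((TensorProduct.map δ LinearMap.id) (δ m))) := by
      rw [hsl, hdec, map_sum, map_sum, map_sum, map_sum]
      refine Finset.sum_congr rfl fun i _ => ?_
      rw [TensorProduct.map_tmul, TensorProduct.map_tmul, KB]
      rfl
    rw [hLHS, ← hbridge, hRHS]
  · -- counitality of the left coaction
    intro m
    obtain ⟨n', xx, yy, hdec⟩ := YD.exists_fin (δ m)
    have hsl := hslgen m n' xx yy hdec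
    have hcnt := hδcounit m
    rw [hdec] at hcnt
    simp only [map_sum, TensorProduct.map_tmul, LinearMap.id_coe, id_eq,
      TensorProduct.rid_tmul] at hcnt
    rw [hsl]
    simp only [map_sum, TensorProduct.map_tmul, LinearMap.id_coe, id_eq,
      TensorProduct.lid_tmul]
    calc ∑ i, Coalgebra.counit (R := k) ((eC ^ l) (yy i)) • xx i
        = ∑ i, Coalgebra.counit (R := k) (yy i) • xx i :=
          Finset.sum_congr rfl fun i _ => by rw [hECc]
      _ = m := hcnt
  · -- left relative Yetter–Drinfeld condition
    intro b m p b₁ b₂ b₃ hΔ n cc ww hδ'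
    obtain ⟨q, xx, yy, hdec⟩ := YD.exists_fin (δ m)
    set G := ((eB ^ (-l)).toLinearMap : B →ₗ[k] B) with hG
    have P1 : ∀ t : B ⊗[k] B,
        (TensorProduct.map (Coalgebra.comul (R := k)) LinearMap.id)
          (TensorProduct.map G G ((TensorProduct.comm k B B) t))
        = (TensorProduct.map
            (TensorProduct.map G G ∘ₗ (TensorProduct.comm k B B).toLinearMap) G)
            ((TensorProduct.comm k B (B ⊗[k] B))
              ((TensorProduct.map LinearMap.id (Coalgebra.comul (R := k))) t)) := by
      intro t
      induction t using TensorProduct.induction_on with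
      | zero => simp
      | tmul x y =>
        simp only [TensorProduct.map_tmul, TensorProduct.comm_tmul, LinearMap.id_coe, id_eq,
          LinearMap.comp_apply, LinearEquiv.coe_toLinearMap]
        rw [show (G y : B) = (eB ^ (-l)) y from rfl, hgBd y]
      | add t₁ t₂ h₁ h₂ => simp only [map_add, h₁, h₂]
    have hcoB : (TensorProduct.map LinearMap.id (Coalgebra.comul (R := k)))
        (Coalgebra.comul (R := k) b)
        = ∑ j, b₁ j ⊗ₜ[k] (b₂ j ⊗ₜ[k] b₃ j) := by
      have hco : (TensorProduct.assoc k B B B)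
          ((TensorProduct.map (Coalgebra.comul (R := k)) LinearMap.id)
            (Coalgebra.comul (R := k) b))
          = (TensorProduct.map LinearMap.id (Coalgebra.comul (R := k)))
              (Coalgebra.comul (R := k) b) := Coalgebra.coassoc_apply (R := k) b
      rw [← hco, hΔ, map_sum]
      simp only [TensorProduct.assoc_tmul]
    have hΔ2 : (TensorProduct.map (Coalgebra.comul (R := k)) LinearMap.id)
        (Coalgebra.comul (R := k) ((eB ^ (-l)) b))
        = ∑ j, ((eB ^ (-l)) (b₃ j) ⊗ₜ[k] (eB ^ (-l)) (b₂ j)) ⊗ₜ[k] (eB ^ (-l)) (b₁ j) := by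
      rw [hgBd b]
      rw [show TensorProduct.map (eB ^ (-l)).toLinearMap (eB ^ (-l)).toLinearMap
        = TensorProduct.map G G from rfl]
      rw [P1 (Coalgebra.comul (R := k) b), hcoB, map_sum, map_sum]
      refine Finset.sum_congr rfl fun j _ => ?_
      simp only [TensorProduct.comm_tmul, TensorProduct.map_tmul, LinearMap.comp_apply,
        LinearEquiv.coe_toLinearMap]
      rfl
    have hydd := hyd m ((eB ^ (-l)) b) q xx yy hdec p (fun j => (eB ^ (-l)) (b₃ j))
        (fun j => (eB ^ (-l)) (b₂ j)) (fun j => (eB ^ (-l)) (b₁ j)) hΔ2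
    have hL : SlCoact k C M eC l δ (SlAct k B M eB l μM b m)
        = ∑ j, ∑ i,
            ((eC ^ l) (HopfAlgebra.antipode (R := k) (ρ ((eB ^ (-l)) (b₃ j))) * yy i *
              ρ ((eB ^ (-l)) (b₁ j)))) ⊗ₜ[k] μM (xx i) ((eB ^ (-l)) (b₂ j)) := by
      rw [SlCoact, SlAct]
      simp only [LinearMap.comp_apply, LinearEquiv.coe_toLinearMap]
      rw [hydd]
      simp only [map_sum, TensorProduct.comm_tmul, TensorProduct.map_tmul,
        LinearMap.id_coe, id_eq, LinearEquiv.coe_coe]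
    have hzC : ∀ z : C, (eC ^ l) ((eC ^ (-l)) z) = z := by
      intro z
      rw [← YD.zpow_apply_add eC l (-l) z, show l + -l = 0 by ring, zpow_zero]
      rfl
    have hSc : ∀ z : C, (eC ^ l) (HopfAlgebra.antipode (R := k) ((eC ^ (-l)) z))
        = HopfAlgebra.antipode (R := k) z := by
      intro z
      rw [← heC, ← heC]
      have h1 : eC ((eC ^ (-l)) z) = (eC ^ (1 + -l)) z := by
        rw [YD.zpow_apply_add eC 1 (-l) z, zpow_one]
      rw [h1, ← YD.zpow_apply_add, show l + (1 + -l) = 1 by ring, zpow_one]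
    have hρg : ∀ x : B, ρ ((eB ^ (-l)) x) = (eC ^ (-l)) (ρ x) :=
      YD.rho_zpow ρ eB eC heB heC (-l)
    have hslm := hslgen m q xx yy hdec
    have heq : (∑ i, ((eC ^ l) (yy i) : C) ⊗ₜ[k] (xx i)) = ∑ i, cc i ⊗ₜ[k] ww i := by
      rw [← hslm, hδ']
    rw [hL]
    refine Finset.sum_congr rfl fun j _ => ?_
    have hcoef : ∀ i, ((eC ^ l) (HopfAlgebra.antipode (R := k) (ρ ((eB ^ (-l)) (b₃ j))) *
          yy i * ρ ((eB ^ (-l)) (b₁ j))))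
        = ρ (b₁ j) * ((eC ^ l) (yy i) *
            ρ (HopfAlgebra.antipode (R := k) (b₃ j))) := by
      intro i
      rw [hECm, hECm, hρg (b₁ j), hzC, hρg (b₃ j), hSc, YD.map_antipode' ρ (b₃ j)]
    have hstep1 : (∑ i,
          ((eC ^ l) (HopfAlgebra.antipode (R := k) (ρ ((eB ^ (-l)) (b₃ j))) * yy i *
            ρ ((eB ^ (-l)) (b₁ j)))) ⊗ₜ[k] μM (xx i) ((eB ^ (-l)) (b₂ j)))
        = ∑ i, (ρ (b₁ j) * ((eC ^ l) (yy i) *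
            ρ (HopfAlgebra.antipode (R := k) (b₃ j)))) ⊗ₜ[k]
              μM (xx i) ((eB ^ (-l)) (b₂ j)) :=
      Finset.sum_congr rfl fun i _ => by rw [hcoef i]
    have happ := congrArg (TensorProduct.map
        ((LinearMap.mulLeft k (ρ (b₁ j))) ∘ₗ
          (LinearMap.mulRight k (ρ (HopfAlgebra.antipode (R := k) (b₃ j)))))
        (μM.flip ((eB ^ (-l)) (b₂ j)))) heq
    simp only [map_sum, TensorProduct.map_tmul, LinearMap.comp_apply,
      LinearMap.mulLeft_apply, LinearMap.mulRight_apply, LinearMap.flip_apply] at happ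
    rw [hstep1, happ]
    refine Finset.sum_congr rfl fun i _ => ?_
    rw [SlAct, mul_assoc]

end
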